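/- Let γ > 2, μ, σ > 0, ν = 2μ/((γ−2)σ²) > 0, a = 1/(2−γ), and define for n ∈ ℕ the function p_n(x) = x^{1−γ} e^{−ν x^{2−γ}} L_n^{a}(ν x^{2−γ}). Then L_γ[p_n] = (μ − n μ(γ−2)) p_n on (0,∞), where L_γ[p] = −μ ∂_x(x p) + ∂_{xx}((σ²/2) x^γ p). -/

import Mathlib

open Real Set

/-- Eigenvalue equation for the CEV Fokker–Planck operator, `γ > 2`.
`L` stands for the generalized Laguerre polynomial `L_n^a` with `a = 1/(2-γ)`,
characterized by smoothness and the Laguerre ODE `y u'' + (a+1-y) u' + n u = 0`. -/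
theorem cev_eigenfunctions_gt_two (γ μ σ : ℝ) (hγ2 : 2 < γ) (hμ : 0 < μ)
    (hσ : 0 < σ) (a ν : ℝ) (ha : a = 1 / (2 - γ)) (hν : ν = 2 * μ / ((γ - 2) * σ ^ 2))
    (n : ℕ) (L : ℝ → ℝ) (hL : ContDiff ℝ ⊤ L)
    (hLag : ∀ y : ℝ, 0 < y →
      y * deriv (deriv L) y + (a + 1 - y) * deriv L y + (n : ℝ) * L y = 0)
    (p : ℝ → ℝ)
    (hp : p = fun x => x ^ (1 - γ) * Real.exp (-ν * x ^ (2 - γ)) * L (ν * x ^ (2 - γ))) :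
    ∀ x : ℝ, 0 < x →
      -μ * deriv (fun t => t * p t) x
        + deriv (deriv (fun t => σ ^ 2 / 2 * t ^ γ * p t)) x
      = (μ - (n : ℝ) * μ * (γ - 2)) * p x := by
  intro x hx
  have hγ0 : γ - 2 ≠ 0 := by intro h; linarith
  have hγ0' : (2:ℝ) - γ ≠ 0 := by intro h; linarith
  have hσ0 : σ ≠ 0 := hσ.ne'
  have hν0 : 0 < ν := by
    rw [hν]
    exact div_pos (by linarith) (mul_pos (by linarith) (pow_pos hσ 2))
  have hLdiff : Differentiable ℝ L := hL.differentiable (by simp)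
  have hL1diff : Differentiable ℝ (deriv L) := by
    have h1 : ContDiff ℝ (↑(⊤:ℕ∞)) L := hL.of_le le_top
    exact ((contDiff_infty_iff_deriv.mp h1).2).differentiable (by simp)
  -- derivative of t ↦ ν * t ^ (2-γ)
  have hy : ∀ t : ℝ, 0 < t →
      HasDerivAt (fun s : ℝ => ν * s ^ (2 - γ)) (ν * (2 - γ) * t ^ (1 - γ)) t := by
    intro t ht
    have h := (Real.hasDerivAt_rpow_const (p := 2 - γ) (Or.inl ht.ne')).const_mul ν
    refine h.congr_deriv ?_
    rw [show (2:ℝ) - γ - 1 = 1 - γ by ring]; ring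
  -- derivative of the exponential factor
  have hE : ∀ t : ℝ, 0 < t →
      HasDerivAt (fun s : ℝ => Real.exp (-(ν * s ^ (2 - γ))))
        (Real.exp (-(ν * t ^ (2 - γ))) * -(ν * (2 - γ) * t ^ (1 - γ))) t := by
    intro t ht
    exact ((hy t ht).neg).exp
  -- derivative of the L factor
  have hLy : ∀ t : ℝ, 0 < t →
      HasDerivAt (fun s : ℝ => L (ν * s ^ (2 - γ)))
        (deriv L (ν * t ^ (2 - γ)) * (ν * (2 - γ) * t ^ (1 - γ))) t := by
    intro t ht
    exact (hLdiff.differentiableAt.hasDerivAt).comp t (hy t ht)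
  have hL1y : ∀ t : ℝ, 0 < t →
      HasDerivAt (fun s : ℝ => deriv L (ν * s ^ (2 - γ)))
        (deriv (deriv L) (ν * t ^ (2 - γ)) * (ν * (2 - γ) * t ^ (1 - γ))) t := by
    intro t ht
    exact (hL1diff.differentiableAt.hasDerivAt).comp t (hy t ht)
  -- g = E * L∘y  and its derivative g1
  have hg : ∀ t : ℝ, 0 < t →
      HasDerivAt (fun s : ℝ => Real.exp (-(ν * s ^ (2 - γ))) * L (ν * s ^ (2 - γ)))
        (ν * (2 - γ) * t ^ (1 - γ) *
          (Real.exp (-(ν * t ^ (2 - γ))) *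
            (deriv L (ν * t ^ (2 - γ)) - L (ν * t ^ (2 - γ))))) t := by
    intro t ht
    have h := (hE t ht).mul (hLy t ht)
    refine h.congr_deriv ?_; ring
  -- derivative of g1
  have hg1 : ∀ t : ℝ, 0 < t →
      HasDerivAt (fun s : ℝ => ν * (2 - γ) * s ^ (1 - γ) *
          (Real.exp (-(ν * s ^ (2 - γ))) *
            (deriv L (ν * s ^ (2 - γ)) - L (ν * s ^ (2 - γ)))))
        (ν * (2 - γ) * ((1 - γ) * t ^ (-γ)) *
            (Real.exp (-(ν * t ^ (2 - γ))) *
              (deriv L (ν * t ^ (2 - γ)) - L (ν * t ^ (2 - γ))))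
          + (ν * (2 - γ)) ^ 2 * (t ^ (1 - γ)) ^ 2 *
            (Real.exp (-(ν * t ^ (2 - γ))) *
              (deriv (deriv L) (ν * t ^ (2 - γ)) - 2 * deriv L (ν * t ^ (2 - γ))
                + L (ν * t ^ (2 - γ))))) t := by
    intro t ht
    have hq : HasDerivAt (fun s : ℝ => ν * (2 - γ) * s ^ (1 - γ))
        (ν * (2 - γ) * ((1 - γ) * t ^ (-γ))) t := by
      have h := (Real.hasDerivAt_rpow_const (p := 1 - γ) (Or.inl ht.ne')).const_mul (ν * (2 - γ))
      refine h.congr_deriv ?_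
      rw [show (1:ℝ) - γ - 1 = -γ by ring]
    have h := hq.mul ((hE t ht).mul ((hL1y t ht).sub (hLy t ht)))
    refine h.congr_deriv ?_; simp only [Pi.mul_apply, Pi.sub_apply]; ring
  -- derivative of p
  have hP : ∀ t : ℝ, 0 < t →
      HasDerivAt p
        ((1 - γ) * t ^ (-γ) * (Real.exp (-(ν * t ^ (2 - γ))) * L (ν * t ^ (2 - γ)))
          + t ^ (1 - γ) * (ν * (2 - γ) * t ^ (1 - γ) *
            (Real.exp (-(ν * t ^ (2 - γ))) *
              (deriv L (ν * t ^ (2 - γ)) - L (ν * t ^ (2 - γ)))))) t := by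
    intro t ht
    have hpe : p = fun s : ℝ => s ^ (1 - γ) *
        (Real.exp (-(ν * s ^ (2 - γ))) * L (ν * s ^ (2 - γ))) := by
      rw [hp]; funext s; rw [neg_mul]; ring
    rw [hpe]
    have hq : HasDerivAt (fun s : ℝ => s ^ (1 - γ)) ((1 - γ) * t ^ (-γ)) t := by
      have h := Real.hasDerivAt_rpow_const (p := 1 - γ) (Or.inl ht.ne')
      convert h using 2
      rw [show (1:ℝ) - γ - 1 = -γ by ring]
    exact hq.mul (hg t ht)
  -- first term of the operator
  have e1 : deriv (fun t => t * p t) x =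
      1 * p x + x *
        ((1 - γ) * x ^ (-γ) * (Real.exp (-(ν * x ^ (2 - γ))) * L (ν * x ^ (2 - γ)))
          + x ^ (1 - γ) * (ν * (2 - γ) * x ^ (1 - γ) *
            (Real.exp (-(ν * x ^ (2 - γ))) *
              (deriv L (ν * x ^ (2 - γ)) - L (ν * x ^ (2 - γ)))))) := by
    exact ((hasDerivAt_id' x).mul (hP x hx)).deriv
  -- second term: replace x^γ * p by x * g on a neighborhood
  have hFeq : (fun t => σ ^ 2 / 2 * t ^ γ * p t) =ᶠ[nhds x]
      (fun t => σ ^ 2 / 2 * (t * (Real.exp (-(ν * t ^ (2 - γ))) * L (ν * t ^ (2 - γ))))) := by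
    filter_upwards [isOpen_Ioi.mem_nhds hx] with t (ht : 0 < t)
    simp only [hp, neg_mul]
    have ht1 : (t:ℝ) ^ γ * t ^ (1 - γ) = t := by
      rw [← Real.rpow_add ht, show γ + (1 - γ) = 1 by ring, Real.rpow_one]
    linear_combination (σ ^ 2 / 2 * Real.exp (-(ν * t ^ (2 - γ))) * L (ν * t ^ (2 - γ))) * ht1
  have hF2 : ∀ t : ℝ, 0 < t →
      HasDerivAt (fun s : ℝ => σ ^ 2 / 2 *
          (s * (Real.exp (-(ν * s ^ (2 - γ))) * L (ν * s ^ (2 - γ)))))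
        (σ ^ 2 / 2 * (Real.exp (-(ν * t ^ (2 - γ))) * L (ν * t ^ (2 - γ))
          + t * (ν * (2 - γ) * t ^ (1 - γ) *
            (Real.exp (-(ν * t ^ (2 - γ))) *
              (deriv L (ν * t ^ (2 - γ)) - L (ν * t ^ (2 - γ))))))) t := by
    intro t ht
    have h := ((hasDerivAt_id' t).mul (hg t ht)).const_mul (σ ^ 2 / 2)
    refine h.congr_deriv ?_; ring
  have hF2' : deriv (fun s : ℝ => σ ^ 2 / 2 *
        (s * (Real.exp (-(ν * s ^ (2 - γ))) * L (ν * s ^ (2 - γ))))) =ᶠ[nhds x]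
      (fun t : ℝ => σ ^ 2 / 2 * (Real.exp (-(ν * t ^ (2 - γ))) * L (ν * t ^ (2 - γ))
          + t * (ν * (2 - γ) * t ^ (1 - γ) *
            (Real.exp (-(ν * t ^ (2 - γ))) *
              (deriv L (ν * t ^ (2 - γ)) - L (ν * t ^ (2 - γ))))))) := by
    filter_upwards [isOpen_Ioi.mem_nhds hx] with t (ht : 0 < t)
    exact (hF2 t ht).deriv
  have hInner : HasDerivAt (fun t : ℝ => σ ^ 2 / 2 *
        (Real.exp (-(ν * t ^ (2 - γ))) * L (ν * t ^ (2 - γ))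
          + t * (ν * (2 - γ) * t ^ (1 - γ) *
            (Real.exp (-(ν * t ^ (2 - γ))) *
              (deriv L (ν * t ^ (2 - γ)) - L (ν * t ^ (2 - γ)))))))
      (σ ^ 2 / 2 *
        (ν * (2 - γ) * x ^ (1 - γ) *
          (Real.exp (-(ν * x ^ (2 - γ))) *
            (deriv L (ν * x ^ (2 - γ)) - L (ν * x ^ (2 - γ))))
        + (ν * (2 - γ) * x ^ (1 - γ) *
          (Real.exp (-(ν * x ^ (2 - γ))) *
            (deriv L (ν * x ^ (2 - γ)) - L (ν * x ^ (2 - γ))))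
          + x * (ν * (2 - γ) * ((1 - γ) * x ^ (-γ)) *
              (Real.exp (-(ν * x ^ (2 - γ))) *
                (deriv L (ν * x ^ (2 - γ)) - L (ν * x ^ (2 - γ))))
            + (ν * (2 - γ)) ^ 2 * (x ^ (1 - γ)) ^ 2 *
              (Real.exp (-(ν * x ^ (2 - γ))) *
                (deriv (deriv L) (ν * x ^ (2 - γ)) - 2 * deriv L (ν * x ^ (2 - γ))
                  + L (ν * x ^ (2 - γ)))))))) x := by
    have h := ((hg x hx).add ((hasDerivAt_id' x).mul (hg1 x hx))).const_mul (σ ^ 2 / 2)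
    refine h.congr_deriv ?_; ring
  have e2 : deriv (deriv (fun t => σ ^ 2 / 2 * t ^ γ * p t)) x = _ :=
    (hFeq.deriv).deriv_eq.trans (hF2'.deriv_eq.trans hInner.deriv)
  rw [e1, e2]
  simp only [hp, neg_mul]
  -- Laguerre ODE at y = ν x^(2-γ)
  have ode := hLag (ν * x ^ (2 - γ)) (mul_pos hν0 (Real.rpow_pos_of_pos hx _))
  -- rewrite powers in terms of W = x^(-γ)
  have w2 : x ^ ((2:ℝ) - γ) = x * (x * x ^ (-γ)) := by
    rw [show (2:ℝ) - γ = 1 + (1 + -γ) by ring, Real.rpow_add hx, Real.rpow_add hx,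
      Real.rpow_one]
  have w1 : x ^ ((1:ℝ) - γ) = x * x ^ (-γ) := by
    rw [show (1:ℝ) - γ = 1 + -γ by ring, Real.rpow_add hx, Real.rpow_one]
  rw [w2] at ode ⊢
  rw [w1]
  have hS : σ ^ 2 * ν * (2 - γ) + 2 * μ = 0 := by
    rw [hν]; field_simp; ring
  have hT : (2 - γ) * a = 1 := by
    rw [ha]; field_simp
  set W : ℝ := x ^ (-γ) with hW
  set Y : ℝ := ν * (x * (x * W)) with hY
  set E : ℝ := Real.exp (-Y) with hE'
  set l0 : ℝ := L Y with hl0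
  set l1 : ℝ := deriv L Y with hl1
  set l2 : ℝ := deriv (deriv L) Y with hl2
  linear_combination (-μ * (2 - γ) * (x * W) * E) * ode
    + (E * ((ν * (2 - γ) / 2) * (x ^ 3 * W ^ 2) * (l2 - 2 * l1 + l0)
        + ((2 - γ + 1) / 2) * (x * W) * (l1 - l0))) * hS
    + (μ * (x * W) * l1 * E) * hT
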